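/- Let φ be the involution on S_n(132) defined by φ(empty) = empty and φ(α ⊖ (β ⊕ 1)) = φ(β) ⊖ (φ(α) ⊕ 1). For every π ∈ S_n(132), the number of occurrences of the vincular pattern 2-\underline{31} in φ(π) equals the number of occurrences of 2-\underline{13} in π, and the number of occurrences of 2-\underline{13} in φ(π) equals the number of occurrences of 2-\underline{31} in π. -/

import Mathlib

open Equiv Finset

/-- π avoids the classical pattern 132. -/
def avoids132 {n : ℕ} (π : Equiv.Perm (Fin n)) : Prop :=
  ¬ ∃ i j k : Fin n, i < j ∧ j < k ∧ π i < π k ∧ π k < π j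

/-- π avoids the classical pattern 231. -/
def avoids231 {n : ℕ} (π : Equiv.Perm (Fin n)) : Prop :=
  ¬ ∃ i j k : Fin n, i < j ∧ j < k ∧ π k < π i ∧ π i < π j

/-- π avoids the classical pattern 312. -/
def avoids312 {n : ℕ} (π : Equiv.Perm (Fin n)) : Prop :=
  ¬ ∃ i j k : Fin n, i < j ∧ j < k ∧ π j < π k ∧ π k < π i

/-- Direct sum α ⊕ β of permutations. -/
def dsum {a b : ℕ} (α : Equiv.Perm (Fin a)) (β : Equiv.Perm (Fin b)) :
    Equiv.Perm (Fin (a + b)) :=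
  finSumFinEquiv.symm.trans ((Equiv.sumCongr α β).trans finSumFinEquiv)

/-- Skew sum α ⊖ β of permutations. -/
def ssum {a b : ℕ} (α : Equiv.Perm (Fin a)) (β : Equiv.Perm (Fin b)) :
    Equiv.Perm (Fin (a + b)) :=
  finSumFinEquiv.symm.trans ((Equiv.sumCongr α β).trans
    ((Equiv.sumComm (Fin a) (Fin b)).trans
      (finSumFinEquiv.trans (finCongr (Nat.add_comm b a)))))

/-- Transport a permutation of Fin m along an equality m = n. -/
def castPerm {m n : ℕ} (h : m = n) (π : Equiv.Perm (Fin m)) : Equiv.Perm (Fin n) :=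
  Equiv.permCongr (finCongr h) π

/-- Number of descents. -/
def des {n : ℕ} (π : Equiv.Perm (Fin n)) : ℕ :=
  (Finset.univ.filter (fun p : Fin n × Fin n =>
    (p.1 : ℕ) + 1 = (p.2 : ℕ) ∧ π p.2 < π p.1)).card

/-- Number of occurrences of the vincular pattern 2-\underline{31}. -/
def occ2_31 {n : ℕ} (π : Equiv.Perm (Fin n)) : ℕ :=
  (Finset.univ.filter (fun p : Fin n × Fin n × Fin n =>
    p.1 < p.2.1 ∧ (p.2.1 : ℕ) + 1 = (p.2.2 : ℕ) ∧
      π p.2.2 < π p.1 ∧ π p.1 < π p.2.1)).card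

/-- Number of occurrences of the vincular pattern 2-\underline{13}. -/
def occ2_13 {n : ℕ} (π : Equiv.Perm (Fin n)) : ℕ :=
  (Finset.univ.filter (fun p : Fin n × Fin n × Fin n =>
    p.1 < p.2.1 ∧ (p.2.1 : ℕ) + 1 = (p.2.2 : ℕ) ∧
      π p.2.1 < π p.1 ∧ π p.1 < π p.2.2)).card

/-- Number of occurrences of the vincular pattern \underline{21}-3. -/
def occ21_3 {n : ℕ} (π : Equiv.Perm (Fin n)) : ℕ :=
  (Finset.univ.filter (fun p : Fin n × Fin n × Fin n =>
    (p.1 : ℕ) + 1 = (p.2.1 : ℕ) ∧ p.2.1 < p.2.2 ∧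
      π p.2.1 < π p.1 ∧ π p.1 < π p.2.2)).card

/-- Number of occurrences of the vincular pattern \underline{23}-1. -/
def occ23_1 {n : ℕ} (π : Equiv.Perm (Fin n)) : ℕ :=
  (Finset.univ.filter (fun p : Fin n × Fin n × Fin n =>
    (p.1 : ℕ) + 1 = (p.2.1 : ℕ) ∧ p.2.1 < p.2.2 ∧
      π p.2.2 < π p.1 ∧ π p.1 < π p.2.1)).card

/-- Number of occurrences of the vincular pattern 3-\underline{12}. -/
def occ3_12 {n : ℕ} (π : Equiv.Perm (Fin n)) : ℕ :=
  (Finset.univ.filter (fun p : Fin n × Fin n × Fin n =>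
    p.1 < p.2.1 ∧ (p.2.1 : ℕ) + 1 = (p.2.2 : ℕ) ∧
      π p.2.1 < π p.2.2 ∧ π p.2.2 < π p.1)).card

/-- Number of occurrences of the vincular pattern \underline{31}-2. -/
def occ31_2 {n : ℕ} (π : Equiv.Perm (Fin n)) : ℕ :=
  (Finset.univ.filter (fun p : Fin n × Fin n × Fin n =>
    (p.1 : ℕ) + 1 = (p.2.1 : ℕ) ∧ p.2.1 < p.2.2 ∧
      π p.2.1 < π p.2.2 ∧ π p.2.2 < π p.1)).card

/-- Number of right-to-left maxima. -/
def rlmax {n : ℕ} (π : Equiv.Perm (Fin n)) : ℕ :=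
  (Finset.univ.filter (fun i : Fin n => ∀ j, i < j → π j < π i)).card

/-- Number of right-to-left minima. -/
def rlmin {n : ℕ} (π : Equiv.Perm (Fin n)) : ℕ :=
  (Finset.univ.filter (fun i : Fin n => ∀ j, i < j → π i < π j)).card

/-- Occurrences of the pattern 1-2 ending at the last position: indices i < n-1 with π_i < π_{n-1} (plus the anchor). -/
def stat12end {n : ℕ} (π : Equiv.Perm (Fin n)) : ℕ :=
  (Finset.univ.filter (fun p : Fin n × Fin n =>
    p.1 < p.2 ∧ (p.2 : ℕ) + 1 = n ∧ π p.1 < π p.2)).card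

/-- Occurrences of the pattern 2-1 ending at the last position. -/
def stat21end {n : ℕ} (π : Equiv.Perm (Fin n)) : ℕ :=
  (Finset.univ.filter (fun p : Fin n × Fin n =>
    p.1 < p.2 ∧ (p.2 : ℕ) + 1 = n ∧ π p.2 < π p.1)).card

-- ===== basic val lemmas =====
lemma symm_eq_inl {a c : ℕ} (i : Fin (a + c)) (h : i.val < a) :
    finSumFinEquiv.symm i = Sum.inl (⟨i.val, h⟩ : Fin a) := by
  have he : i = Fin.castAdd c ⟨i.val, h⟩ := by ext; rfl
  conv_lhs => rw [he]
  exact finSumFinEquiv_symm_apply_castAdd _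

lemma symm_eq_inr {a c : ℕ} (i : Fin (a + c)) (h : a ≤ i.val) :
    finSumFinEquiv.symm i = Sum.inr (⟨i.val - a, by omega⟩ : Fin c) := by
  have he : i = Fin.natAdd a ⟨i.val - a, by omega⟩ := by ext; simp; omega
  conv_lhs => rw [he]
  exact finSumFinEquiv_symm_apply_natAdd _

lemma ssum_val_lt {a c : ℕ} (α : Equiv.Perm (Fin a)) (γ : Equiv.Perm (Fin c))
    (i : Fin (a + c)) (h : i.val < a) :
    ((ssum α γ) i).val = c + (α ⟨i.val, h⟩).val := by
  simp [ssum, symm_eq_inl i h]; omega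

lemma ssum_val_ge {a c : ℕ} (α : Equiv.Perm (Fin a)) (γ : Equiv.Perm (Fin c))
    (i : Fin (a + c)) (h : a ≤ i.val) :
    ((ssum α γ) i).val = (γ ⟨i.val - a, by omega⟩).val := by
  simp [ssum, symm_eq_inr i h]

lemma dsum_val_lt {a c : ℕ} (α : Equiv.Perm (Fin a)) (γ : Equiv.Perm (Fin c))
    (i : Fin (a + c)) (h : i.val < a) :
    ((dsum α γ) i).val = (α ⟨i.val, h⟩).val := by
  simp [dsum, symm_eq_inl i h]

lemma dsum_val_ge {a c : ℕ} (α : Equiv.Perm (Fin a)) (γ : Equiv.Perm (Fin c))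
    (i : Fin (a + c)) (h : a ≤ i.val) :
    ((dsum α γ) i).val = a + (γ ⟨i.val - a, by omega⟩).val := by
  simp [dsum, symm_eq_inr i h]

-- ===== sigma = ssum α (dsum β 1) value lemmas =====
section Sigma
variable {a b : ℕ} (α : Equiv.Perm (Fin a)) (β : Equiv.Perm (Fin b))

lemma sval_low {x : Fin a} {y : Fin (a + (b+1))} (h : (y:ℕ) = (x:ℕ)) :
    ((ssum α (dsum β 1)) y).val = (b+1) + (α x).val := by
  have hy : (y:ℕ) < a := by have := x.isLt; omega
  rw [ssum_val_lt α _ y hy, show (⟨(y:ℕ), hy⟩ : Fin a) = x from Fin.ext h]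

lemma sval_mid {x : Fin b} {y : Fin (a + (b+1))} (h : (y:ℕ) = a + (x:ℕ)) :
    ((ssum α (dsum β 1)) y).val = (β x).val := by
  have h1 : a ≤ (y:ℕ) := by omega
  rw [ssum_val_ge α _ y h1]
  rw [dsum_val_lt β (1 : Equiv.Perm (Fin 1)) _ (show (y:ℕ) - a < b by have := x.isLt; omega)]
  congr 2
  exact Fin.ext (show (y:ℕ) - a = (x:ℕ) by omega)

lemma sval_top {y : Fin (a + (b+1))} (h : (y:ℕ) = a + b) :
    ((ssum α (dsum β 1)) y).val = b := by
  have h1 : a ≤ (y:ℕ) := by omega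
  rw [ssum_val_ge α _ y h1]
  rw [dsum_val_ge β (1 : Equiv.Perm (Fin 1)) _ (show b ≤ (y:ℕ) - a by omega)]
  simp

lemma sval_big_iff (y : Fin (a + (b+1))) :
    b < ((ssum α (dsum β 1)) y).val ↔ (y:ℕ) < a := by
  rcases Nat.lt_or_ge (y:ℕ) a with h | h
  · rw [ssum_val_lt α _ y h]; omega
  · rcases Nat.lt_or_ge (y:ℕ) (a+b) with h2 | h2
    · have e := sval_mid α β (x := ⟨(y:ℕ) - a, by omega⟩) (y := y) (show (y:ℕ) = a + ((y:ℕ) - a) from by omega)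
      have e2 : (β ⟨(y:ℕ) - a, by omega⟩).val < b := (β _).isLt
      omega
    · have hy : (y:ℕ) = a + b := by have := y.isLt; omega
      rw [sval_top α β hy]; omega

lemma sval_small {y : Fin (a + (b+1))} (h : a ≤ (y:ℕ)) :
    ((ssum α (dsum β 1)) y).val ≤ b := by
  rcases Nat.lt_or_ge b (((ssum α (dsum β 1)) y).val) with h' | h'
  · exact absurd ((sval_big_iff α β y).mp h') (by omega)
  · exact h'

end Sigma

lemma card_split {n : ℕ} (P : (Fin n × Fin n × Fin n) → Prop) [DecidablePred P]
    (a c : ℕ) (hac : a ≤ c) (hn : n = c + 1) :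
    (univ.filter P).card =
      (univ.filter (fun p => P p ∧ (p.2.2:ℕ) < a)).card
    + (univ.filter (fun p => P p ∧ (p.2.2:ℕ) = a)).card
    + (univ.filter (fun p => P p ∧ a < (p.2.2:ℕ) ∧ (p.2.2:ℕ) < c)).card
    + (univ.filter (fun p => P p ∧ a < (p.2.2:ℕ) ∧ (p.2.2:ℕ) = c)).card := by
  have key : univ.filter P =
      (((univ.filter (fun p => P p ∧ (p.2.2:ℕ) < a))
      ∪ (univ.filter (fun p => P p ∧ (p.2.2:ℕ) = a)))
      ∪ (univ.filter (fun p => P p ∧ a < (p.2.2:ℕ) ∧ (p.2.2:ℕ) < c)))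
      ∪ (univ.filter (fun p => P p ∧ a < (p.2.2:ℕ) ∧ (p.2.2:ℕ) = c)) := by
    ext p
    simp only [mem_filter, mem_union, mem_univ, true_and]
    have hlt := p.2.2.isLt
    constructor
    · intro hp
      rcases Nat.lt_trichotomy (p.2.2:ℕ) a with h | h | h
      · exact Or.inl (Or.inl (Or.inl ⟨hp, h⟩))
      · exact Or.inl (Or.inl (Or.inr ⟨hp, h⟩))
      · rcases Nat.lt_or_ge (p.2.2:ℕ) c with h2 | h2
        · exact Or.inl (Or.inr ⟨hp, h, h2⟩)
        · exact Or.inr ⟨hp, h, by omega⟩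
    · rintro ((( ⟨h, _⟩ | ⟨h, _⟩) | ⟨h, _⟩) | ⟨h, _⟩) <;> exact h
  have d1 : Disjoint (univ.filter (fun p : Fin n × Fin n × Fin n => P p ∧ (p.2.2:ℕ) < a))
      (univ.filter (fun p => P p ∧ (p.2.2:ℕ) = a)) := by
    rw [Finset.disjoint_left]
    intro p hp hq
    simp only [mem_filter, mem_univ, true_and] at hp hq
    obtain ⟨_, h1⟩ := hp; obtain ⟨_, h2⟩ := hq
    omega
  have d2 : Disjoint ((univ.filter (fun p : Fin n × Fin n × Fin n => P p ∧ (p.2.2:ℕ) < a))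
      ∪ (univ.filter (fun p => P p ∧ (p.2.2:ℕ) = a)))
      (univ.filter (fun p => P p ∧ a < (p.2.2:ℕ) ∧ (p.2.2:ℕ) < c)) := by
    rw [Finset.disjoint_left]
    intro p hp hq
    simp only [mem_union, mem_filter, mem_univ, true_and] at hp hq
    obtain ⟨_, h2, h3⟩ := hq
    rcases hp with ⟨_, h1⟩ | ⟨_, h1⟩ <;> omega
  have d3 : Disjoint ((((univ.filter (fun p : Fin n × Fin n × Fin n => P p ∧ (p.2.2:ℕ) < a))
      ∪ (univ.filter (fun p => P p ∧ (p.2.2:ℕ) = a)))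
      ∪ (univ.filter (fun p => P p ∧ a < (p.2.2:ℕ) ∧ (p.2.2:ℕ) < c))))
      (univ.filter (fun p => P p ∧ a < (p.2.2:ℕ) ∧ (p.2.2:ℕ) = c)) := by
    rw [Finset.disjoint_left]
    intro p hp hq
    simp only [mem_union, mem_filter, mem_univ, true_and] at hp hq
    obtain ⟨_, h2, h3⟩ := hq
    rcases hp with (⟨_, h1⟩ | ⟨_, h1⟩) | ⟨_, h1, h1'⟩ <;> omega
  rw [key, Finset.card_union_of_disjoint d3, Finset.card_union_of_disjoint d2,
      Finset.card_union_of_disjoint d1]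

section Pieces
variable {a b : ℕ} (α : Equiv.Perm (Fin a)) (β : Equiv.Perm (Fin b))

-- occurrences of 2-31 with all three positions in the α block
lemma piece_low31 :
    (univ.filter (fun p : Fin (a+(b+1)) × Fin (a+(b+1)) × Fin (a+(b+1)) =>
      (p.1 < p.2.1 ∧ (p.2.1:ℕ) + 1 = (p.2.2:ℕ) ∧
        (ssum α (dsum β 1)) p.2.2 < (ssum α (dsum β 1)) p.1 ∧
        (ssum α (dsum β 1)) p.1 < (ssum α (dsum β 1)) p.2.1) ∧ (p.2.2:ℕ) < a)).card
    = occ2_31 α := by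
  rw [occ2_31]
  refine (Finset.card_nbij
    (fun q : Fin a × Fin a × Fin a =>
      ((⟨(q.1:ℕ), by have := q.1.isLt; omega⟩ : Fin (a+(b+1))),
       (⟨(q.2.1:ℕ), by have := q.2.1.isLt; omega⟩ : Fin (a+(b+1))),
       (⟨(q.2.2:ℕ), by have := q.2.2.isLt; omega⟩ : Fin (a+(b+1))))) ?_ ?_ ?_).symm
  · intro q hq
    simp only [mem_coe, mem_filter, mem_univ, true_and, Fin.lt_def] at hq ⊢
    have e1 := sval_low α β (x := q.1) (y := ⟨(q.1:ℕ), by have := q.1.isLt; omega⟩) rfl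
    have e2 := sval_low α β (x := q.2.1) (y := ⟨(q.2.1:ℕ), by have := q.2.1.isLt; omega⟩) rfl
    have e3 := sval_low α β (x := q.2.2) (y := ⟨(q.2.2:ℕ), by have := q.2.2.isLt; omega⟩) rfl
    have := q.2.2.isLt
    omega
  · intro q _ q' _ heq
    simp only [Prod.mk.injEq, Fin.mk.injEq] at heq
    obtain ⟨e1, e2, e3⟩ := heq
    exact Prod.ext (Fin.ext e1) (Prod.ext (Fin.ext e2) (Fin.ext e3))
  · intro p hp
    simp only [coe_filter, Set.mem_setOf_eq, mem_univ, true_and, Fin.lt_def] at hp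
    obtain ⟨⟨h1, h2, h3, h4⟩, h5⟩ := hp
    have hc1 : (p.1:ℕ) < a := by omega
    have hc2 : (p.2.1:ℕ) < a := by omega
    have e1 := sval_low α β (x := ⟨(p.1:ℕ), hc1⟩) (y := p.1) rfl
    have e2 := sval_low α β (x := ⟨(p.2.1:ℕ), hc2⟩) (y := p.2.1) rfl
    have e3 := sval_low α β (x := ⟨(p.2.2:ℕ), h5⟩) (y := p.2.2) rfl
    refine ⟨(⟨(p.1:ℕ), hc1⟩, ⟨(p.2.1:ℕ), hc2⟩, ⟨(p.2.2:ℕ), h5⟩), ?_, ?_⟩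
    · simp only [mem_coe, mem_filter, mem_univ, true_and, Fin.lt_def]
      omega
    · exact Prod.ext (Fin.ext rfl) (Prod.ext (Fin.ext rfl) (Fin.ext rfl))

-- occurrences of 2-13 with all three positions in the α block
lemma piece_low13 :
    (univ.filter (fun p : Fin (a+(b+1)) × Fin (a+(b+1)) × Fin (a+(b+1)) =>
      (p.1 < p.2.1 ∧ (p.2.1:ℕ) + 1 = (p.2.2:ℕ) ∧
        (ssum α (dsum β 1)) p.2.1 < (ssum α (dsum β 1)) p.1 ∧
        (ssum α (dsum β 1)) p.1 < (ssum α (dsum β 1)) p.2.2) ∧ (p.2.2:ℕ) < a)).card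
    = occ2_13 α := by
  rw [occ2_13]
  refine (Finset.card_nbij
    (fun q : Fin a × Fin a × Fin a =>
      ((⟨(q.1:ℕ), by have := q.1.isLt; omega⟩ : Fin (a+(b+1))),
       (⟨(q.2.1:ℕ), by have := q.2.1.isLt; omega⟩ : Fin (a+(b+1))),
       (⟨(q.2.2:ℕ), by have := q.2.2.isLt; omega⟩ : Fin (a+(b+1))))) ?_ ?_ ?_).symm
  · intro q hq
    simp only [mem_coe, mem_filter, mem_univ, true_and, Fin.lt_def] at hq ⊢
    have e1 := sval_low α β (x := q.1) (y := ⟨(q.1:ℕ), by have := q.1.isLt; omega⟩) rfl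
    have e2 := sval_low α β (x := q.2.1) (y := ⟨(q.2.1:ℕ), by have := q.2.1.isLt; omega⟩) rfl
    have e3 := sval_low α β (x := q.2.2) (y := ⟨(q.2.2:ℕ), by have := q.2.2.isLt; omega⟩) rfl
    have := q.2.2.isLt
    omega
  · intro q _ q' _ heq
    simp only [Prod.mk.injEq, Fin.mk.injEq] at heq
    obtain ⟨e1, e2, e3⟩ := heq
    exact Prod.ext (Fin.ext e1) (Prod.ext (Fin.ext e2) (Fin.ext e3))
  · intro p hp
    simp only [coe_filter, Set.mem_setOf_eq, mem_univ, true_and, Fin.lt_def] at hp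
    obtain ⟨⟨h1, h2, h3, h4⟩, h5⟩ := hp
    have hc1 : (p.1:ℕ) < a := by omega
    have hc2 : (p.2.1:ℕ) < a := by omega
    have e1 := sval_low α β (x := ⟨(p.1:ℕ), hc1⟩) (y := p.1) rfl
    have e2 := sval_low α β (x := ⟨(p.2.1:ℕ), hc2⟩) (y := p.2.1) rfl
    have e3 := sval_low α β (x := ⟨(p.2.2:ℕ), h5⟩) (y := p.2.2) rfl
    refine ⟨(⟨(p.1:ℕ), hc1⟩, ⟨(p.2.1:ℕ), hc2⟩, ⟨(p.2.2:ℕ), h5⟩), ?_, ?_⟩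
    · simp only [mem_coe, mem_filter, mem_univ, true_and, Fin.lt_def]
      omega
    · exact Prod.ext (Fin.ext rfl) (Prod.ext (Fin.ext rfl) (Fin.ext rfl))

-- occurrences of 2-31 with the adjacent pair inside the β block
lemma piece_mid31 :
    (univ.filter (fun p : Fin (a+(b+1)) × Fin (a+(b+1)) × Fin (a+(b+1)) =>
      (p.1 < p.2.1 ∧ (p.2.1:ℕ) + 1 = (p.2.2:ℕ) ∧
        (ssum α (dsum β 1)) p.2.2 < (ssum α (dsum β 1)) p.1 ∧
        (ssum α (dsum β 1)) p.1 < (ssum α (dsum β 1)) p.2.1) ∧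
        a < (p.2.2:ℕ) ∧ (p.2.2:ℕ) < a + b)).card
    = occ2_31 β := by
  rw [occ2_31]
  refine (Finset.card_nbij
    (fun q : Fin b × Fin b × Fin b =>
      ((⟨a + (q.1:ℕ), by have := q.1.isLt; omega⟩ : Fin (a+(b+1))),
       (⟨a + (q.2.1:ℕ), by have := q.2.1.isLt; omega⟩ : Fin (a+(b+1))),
       (⟨a + (q.2.2:ℕ), by have := q.2.2.isLt; omega⟩ : Fin (a+(b+1))))) ?_ ?_ ?_).symm
  · intro q hq
    simp only [mem_coe, mem_filter, mem_univ, true_and, Fin.lt_def] at hq ⊢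
    have e1 := sval_mid α β (x := q.1) (y := ⟨a + (q.1:ℕ), by have := q.1.isLt; omega⟩) rfl
    have e2 := sval_mid α β (x := q.2.1) (y := ⟨a + (q.2.1:ℕ), by have := q.2.1.isLt; omega⟩) rfl
    have e3 := sval_mid α β (x := q.2.2) (y := ⟨a + (q.2.2:ℕ), by have := q.2.2.isLt; omega⟩) rfl
    have := q.2.2.isLt
    omega
  · intro q _ q' _ heq
    simp only [Prod.mk.injEq, Fin.mk.injEq] at heq
    obtain ⟨e1, e2, e3⟩ := heq
    exact Prod.ext (Fin.ext (by omega)) (Prod.ext (Fin.ext (by omega)) (Fin.ext (by omega)))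
  · intro p hp
    simp only [coe_filter, Set.mem_setOf_eq, mem_univ, true_and, Fin.lt_def] at hp
    obtain ⟨⟨h1, h2, h3, h4⟩, h5, h6⟩ := hp
    have hc21 : (p.2.1:ℕ) - a < b := by omega
    have hc22 : (p.2.2:ℕ) - a < b := by omega
    have e21 := sval_mid α β (x := ⟨(p.2.1:ℕ) - a, hc21⟩) (y := p.2.1)
      (show (p.2.1:ℕ) = a + ((p.2.1:ℕ) - a) from by omega)
    have e22 := sval_mid α β (x := ⟨(p.2.2:ℕ) - a, hc22⟩) (y := p.2.2)
      (show (p.2.2:ℕ) = a + ((p.2.2:ℕ) - a) from by omega)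
    have hb21 := (β ⟨(p.2.1:ℕ) - a, hc21⟩).isLt
    have hb22 := (β ⟨(p.2.2:ℕ) - a, hc22⟩).isLt
    have hc1 : a ≤ (p.1:ℕ) := by
      by_contra hcon
      push_neg at hcon
      have hbig := (sval_big_iff α β p.1).mpr hcon
      omega
    have hc1' : (p.1:ℕ) - a < b := by omega
    have e1 := sval_mid α β (x := ⟨(p.1:ℕ) - a, hc1'⟩) (y := p.1)
      (show (p.1:ℕ) = a + ((p.1:ℕ) - a) from by omega)
    refine ⟨(⟨(p.1:ℕ) - a, hc1'⟩, ⟨(p.2.1:ℕ) - a, hc21⟩, ⟨(p.2.2:ℕ) - a, hc22⟩), ?_, ?_⟩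
    · simp only [mem_coe, mem_filter, mem_univ, true_and, Fin.lt_def]
      omega
    · exact Prod.ext (Fin.ext (by show a + ((p.1:ℕ) - a) = (p.1:ℕ); omega))
        (Prod.ext (Fin.ext (by show a + ((p.2.1:ℕ) - a) = (p.2.1:ℕ); omega))
          (Fin.ext (by show a + ((p.2.2:ℕ) - a) = (p.2.2:ℕ); omega)))

-- occurrences of 2-13 with the adjacent pair inside the β block
lemma piece_mid13 :
    (univ.filter (fun p : Fin (a+(b+1)) × Fin (a+(b+1)) × Fin (a+(b+1)) =>
      (p.1 < p.2.1 ∧ (p.2.1:ℕ) + 1 = (p.2.2:ℕ) ∧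
        (ssum α (dsum β 1)) p.2.1 < (ssum α (dsum β 1)) p.1 ∧
        (ssum α (dsum β 1)) p.1 < (ssum α (dsum β 1)) p.2.2) ∧
        a < (p.2.2:ℕ) ∧ (p.2.2:ℕ) < a + b)).card
    = occ2_13 β := by
  rw [occ2_13]
  refine (Finset.card_nbij
    (fun q : Fin b × Fin b × Fin b =>
      ((⟨a + (q.1:ℕ), by have := q.1.isLt; omega⟩ : Fin (a+(b+1))),
       (⟨a + (q.2.1:ℕ), by have := q.2.1.isLt; omega⟩ : Fin (a+(b+1))),
       (⟨a + (q.2.2:ℕ), by have := q.2.2.isLt; omega⟩ : Fin (a+(b+1))))) ?_ ?_ ?_).symm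
  · intro q hq
    simp only [mem_coe, mem_filter, mem_univ, true_and, Fin.lt_def] at hq ⊢
    have e1 := sval_mid α β (x := q.1) (y := ⟨a + (q.1:ℕ), by have := q.1.isLt; omega⟩) rfl
    have e2 := sval_mid α β (x := q.2.1) (y := ⟨a + (q.2.1:ℕ), by have := q.2.1.isLt; omega⟩) rfl
    have e3 := sval_mid α β (x := q.2.2) (y := ⟨a + (q.2.2:ℕ), by have := q.2.2.isLt; omega⟩) rfl
    have := q.2.2.isLt
    omega
  · intro q _ q' _ heq
    simp only [Prod.mk.injEq, Fin.mk.injEq] at heq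
    obtain ⟨e1, e2, e3⟩ := heq
    exact Prod.ext (Fin.ext (by omega)) (Prod.ext (Fin.ext (by omega)) (Fin.ext (by omega)))
  · intro p hp
    simp only [coe_filter, Set.mem_setOf_eq, mem_univ, true_and, Fin.lt_def] at hp
    obtain ⟨⟨h1, h2, h3, h4⟩, h5, h6⟩ := hp
    have hc21 : (p.2.1:ℕ) - a < b := by omega
    have hc22 : (p.2.2:ℕ) - a < b := by omega
    have e21 := sval_mid α β (x := ⟨(p.2.1:ℕ) - a, hc21⟩) (y := p.2.1)
      (show (p.2.1:ℕ) = a + ((p.2.1:ℕ) - a) from by omega)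
    have e22 := sval_mid α β (x := ⟨(p.2.2:ℕ) - a, hc22⟩) (y := p.2.2)
      (show (p.2.2:ℕ) = a + ((p.2.2:ℕ) - a) from by omega)
    have hb21 := (β ⟨(p.2.1:ℕ) - a, hc21⟩).isLt
    have hb22 := (β ⟨(p.2.2:ℕ) - a, hc22⟩).isLt
    have hc1 : a ≤ (p.1:ℕ) := by
      by_contra hcon
      push_neg at hcon
      have hbig := (sval_big_iff α β p.1).mpr hcon
      omega
    have hc1' : (p.1:ℕ) - a < b := by omega
    have e1 := sval_mid α β (x := ⟨(p.1:ℕ) - a, hc1'⟩) (y := p.1)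
      (show (p.1:ℕ) = a + ((p.1:ℕ) - a) from by omega)
    refine ⟨(⟨(p.1:ℕ) - a, hc1'⟩, ⟨(p.2.1:ℕ) - a, hc21⟩, ⟨(p.2.2:ℕ) - a, hc22⟩), ?_, ?_⟩
    · simp only [mem_coe, mem_filter, mem_univ, true_and, Fin.lt_def]
      omega
    · exact Prod.ext (Fin.ext (by show a + ((p.1:ℕ) - a) = (p.1:ℕ); omega))
        (Prod.ext (Fin.ext (by show a + ((p.2.1:ℕ) - a) = (p.2.1:ℕ); omega))
          (Fin.ext (by show a + ((p.2.2:ℕ) - a) = (p.2.2:ℕ); omega)))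

end Pieces

section Boundary
variable {a b : ℕ} (α : Equiv.Perm (Fin a)) (β : Equiv.Perm (Fin b))

-- the boundary piece at p.2.2 = a for 2-31: counts stat12end α
lemma piece_bd31 :
    (univ.filter (fun p : Fin (a+(b+1)) × Fin (a+(b+1)) × Fin (a+(b+1)) =>
      (p.1 < p.2.1 ∧ (p.2.1:ℕ) + 1 = (p.2.2:ℕ) ∧
        (ssum α (dsum β 1)) p.2.2 < (ssum α (dsum β 1)) p.1 ∧
        (ssum α (dsum β 1)) p.1 < (ssum α (dsum β 1)) p.2.1) ∧ (p.2.2:ℕ) = a)).card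
    = stat12end α := by
  rw [stat12end]
  refine (Finset.card_nbij
    (fun q : Fin a × Fin a =>
      ((⟨(q.1:ℕ), by have := q.1.isLt; omega⟩ : Fin (a+(b+1))),
       (⟨(q.2:ℕ), by have := q.2.isLt; omega⟩ : Fin (a+(b+1))),
       (⟨a, by omega⟩ : Fin (a+(b+1))))) ?_ ?_ ?_).symm
  · intro q hq
    simp only [mem_coe, mem_filter, mem_univ, true_and, Fin.lt_def] at hq
    obtain ⟨h1, h2, h3⟩ := hq
    have e1 := sval_low α β (x := q.1) (y := ⟨(q.1:ℕ), by have := q.1.isLt; omega⟩) rfl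
    have e2 := sval_low α β (x := q.2) (y := ⟨(q.2:ℕ), by have := q.2.isLt; omega⟩) rfl
    have e3 := sval_small α β (y := (⟨a, by omega⟩ : Fin (a+(b+1)))) (le_refl a)
    refine mem_filter.mpr ⟨mem_univ _, ⟨?_, ?_, ?_, ?_⟩, ?_⟩
    · show (q.1:ℕ) < (q.2:ℕ)
      exact h1
    · show (q.2:ℕ) + 1 = a
      exact h2
    · show ((ssum α (dsum β 1)) (⟨a, by omega⟩ : Fin (a+(b+1))) : ℕ) <
        ((ssum α (dsum β 1)) (⟨(q.1:ℕ), by have := q.1.isLt; omega⟩ : Fin (a+(b+1))) : ℕ)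
      omega
    · show ((ssum α (dsum β 1)) (⟨(q.1:ℕ), by have := q.1.isLt; omega⟩ : Fin (a+(b+1))) : ℕ) <
        ((ssum α (dsum β 1)) (⟨(q.2:ℕ), by have := q.2.isLt; omega⟩ : Fin (a+(b+1))) : ℕ)
      omega
    · show ((⟨a, by omega⟩ : Fin (a+(b+1))) : ℕ) = a
      rfl
  · intro q _ q' _ heq
    simp only [Prod.mk.injEq, Fin.mk.injEq] at heq
    obtain ⟨e1, e2, _⟩ := heq
    exact Prod.ext (Fin.ext e1) (Fin.ext e2)
  · intro p hp
    simp only [coe_filter, Set.mem_setOf_eq, mem_univ, true_and, Fin.lt_def] at hp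
    obtain ⟨⟨h1, h2, h3, h4⟩, h5⟩ := hp
    have hc1 : (p.1:ℕ) < a := by omega
    have hc2 : (p.2.1:ℕ) < a := by omega
    have e1 := sval_low α β (x := ⟨(p.1:ℕ), hc1⟩) (y := p.1) rfl
    have e2 := sval_low α β (x := ⟨(p.2.1:ℕ), hc2⟩) (y := p.2.1) rfl
    refine ⟨(⟨(p.1:ℕ), hc1⟩, ⟨(p.2.1:ℕ), hc2⟩), ?_, ?_⟩
    · simp only [mem_coe, mem_filter, mem_univ, true_and, Fin.lt_def]
      omega
    · exact Prod.ext (Fin.ext rfl) (Prod.ext (Fin.ext rfl) (Fin.ext (by show a = (p.2.2:ℕ); omega)))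

-- the boundary piece at p.2.2 = a for 2-13 is empty
lemma piece_bd13 :
    (univ.filter (fun p : Fin (a+(b+1)) × Fin (a+(b+1)) × Fin (a+(b+1)) =>
      (p.1 < p.2.1 ∧ (p.2.1:ℕ) + 1 = (p.2.2:ℕ) ∧
        (ssum α (dsum β 1)) p.2.1 < (ssum α (dsum β 1)) p.1 ∧
        (ssum α (dsum β 1)) p.1 < (ssum α (dsum β 1)) p.2.2) ∧ (p.2.2:ℕ) = a)).card
    = 0 := by
  rw [Finset.card_eq_zero, Finset.filter_eq_empty_iff]
  intro p _
  rintro ⟨⟨h1, h2, h3, h4⟩, h5⟩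
  rw [Fin.lt_def] at h1 h3 h4
  have e21 := (sval_big_iff α β p.2.1).mpr (show (p.2.1:ℕ) < a by omega)
  have e1 := (sval_big_iff α β p.1).mpr (show (p.1:ℕ) < a by omega)
  have e3 := sval_small α β (y := p.2.2) (by omega)
  omega

-- the top piece at p.2.2 = a + b for 2-31 is empty
lemma piece_top31 :
    (univ.filter (fun p : Fin (a+(b+1)) × Fin (a+(b+1)) × Fin (a+(b+1)) =>
      (p.1 < p.2.1 ∧ (p.2.1:ℕ) + 1 = (p.2.2:ℕ) ∧
        (ssum α (dsum β 1)) p.2.2 < (ssum α (dsum β 1)) p.1 ∧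
        (ssum α (dsum β 1)) p.1 < (ssum α (dsum β 1)) p.2.1) ∧
        a < (p.2.2:ℕ) ∧ (p.2.2:ℕ) = a + b)).card
    = 0 := by
  rw [Finset.card_eq_zero, Finset.filter_eq_empty_iff]
  intro p _
  rintro ⟨⟨h1, h2, h3, h4⟩, h5, h6⟩
  rw [Fin.lt_def] at h1 h3 h4
  have e3 := sval_top α β (y := p.2.2) h6
  have hc21 : (p.2.1:ℕ) - a < b := by omega
  have e21 := sval_mid α β (x := ⟨(p.2.1:ℕ) - a, hc21⟩) (y := p.2.1)
    (show (p.2.1:ℕ) = a + ((p.2.1:ℕ) - a) from by omega)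
  have hb21 := (β ⟨(p.2.1:ℕ) - a, hc21⟩).isLt
  omega

-- the top piece at p.2.2 = a + b for 2-13: counts stat21end β
lemma piece_top13 :
    (univ.filter (fun p : Fin (a+(b+1)) × Fin (a+(b+1)) × Fin (a+(b+1)) =>
      (p.1 < p.2.1 ∧ (p.2.1:ℕ) + 1 = (p.2.2:ℕ) ∧
        (ssum α (dsum β 1)) p.2.1 < (ssum α (dsum β 1)) p.1 ∧
        (ssum α (dsum β 1)) p.1 < (ssum α (dsum β 1)) p.2.2) ∧
        a < (p.2.2:ℕ) ∧ (p.2.2:ℕ) = a + b)).card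
    = stat21end β := by
  rw [stat21end]
  refine (Finset.card_nbij
    (fun q : Fin b × Fin b =>
      ((⟨a + (q.1:ℕ), by have := q.1.isLt; omega⟩ : Fin (a+(b+1))),
       (⟨a + (q.2:ℕ), by have := q.2.isLt; omega⟩ : Fin (a+(b+1))),
       (⟨a + b, by omega⟩ : Fin (a+(b+1))))) ?_ ?_ ?_).symm
  · intro q hq
    simp only [mem_coe, mem_filter, mem_univ, true_and, Fin.lt_def] at hq
    obtain ⟨h1, h2, h3⟩ := hq
    have e1 := sval_mid α β (x := q.1) (y := ⟨a + (q.1:ℕ), by have := q.1.isLt; omega⟩) rfl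
    have e2 := sval_mid α β (x := q.2) (y := ⟨a + (q.2:ℕ), by have := q.2.isLt; omega⟩) rfl
    have e3 := sval_top α β (y := (⟨a + b, by omega⟩ : Fin (a+(b+1)))) rfl
    have hb1 := (β q.1).isLt
    have hq1 := q.1.isLt
    refine mem_filter.mpr ⟨mem_univ _, ⟨?_, ?_, ?_, ?_⟩, ?_, ?_⟩
    · show a + (q.1:ℕ) < a + (q.2:ℕ)
      omega
    · show (a + (q.2:ℕ)) + 1 = a + b
      omega
    · show ((ssum α (dsum β 1)) (⟨a + (q.2:ℕ), by have := q.2.isLt; omega⟩ : Fin (a+(b+1))) : ℕ) <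
        ((ssum α (dsum β 1)) (⟨a + (q.1:ℕ), by have := q.1.isLt; omega⟩ : Fin (a+(b+1))) : ℕ)
      omega
    · show ((ssum α (dsum β 1)) (⟨a + (q.1:ℕ), by have := q.1.isLt; omega⟩ : Fin (a+(b+1))) : ℕ) <
        ((ssum α (dsum β 1)) (⟨a + b, by omega⟩ : Fin (a+(b+1))) : ℕ)
      omega
    · show a < ((⟨a + b, by omega⟩ : Fin (a+(b+1))) : ℕ)
      show a < a + b
      omega
    · show ((⟨a + b, by omega⟩ : Fin (a+(b+1))) : ℕ) = a + b
      rfl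
  · intro q _ q' _ heq
    simp only [Prod.mk.injEq, Fin.mk.injEq] at heq
    obtain ⟨e1, e2, _⟩ := heq
    exact Prod.ext (Fin.ext (by omega)) (Fin.ext (by omega))
  · intro p hp
    simp only [coe_filter, Set.mem_setOf_eq, mem_univ, true_and, Fin.lt_def] at hp
    obtain ⟨⟨h1, h2, h3, h4⟩, h5, h6⟩ := hp
    have e3 := sval_top α β (y := p.2.2) h6
    have hc21 : (p.2.1:ℕ) - a < b := by omega
    have e21 := sval_mid α β (x := ⟨(p.2.1:ℕ) - a, hc21⟩) (y := p.2.1)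
      (show (p.2.1:ℕ) = a + ((p.2.1:ℕ) - a) from by omega)
    have hc1 : a ≤ (p.1:ℕ) := by
      by_contra hcon
      push_neg at hcon
      have hbig := (sval_big_iff α β p.1).mpr hcon
      omega
    have hc1' : (p.1:ℕ) - a < b := by omega
    have e1 := sval_mid α β (x := ⟨(p.1:ℕ) - a, hc1'⟩) (y := p.1)
      (show (p.1:ℕ) = a + ((p.1:ℕ) - a) from by omega)
    refine ⟨(⟨(p.1:ℕ) - a, hc1'⟩, ⟨(p.2.1:ℕ) - a, hc21⟩), ?_, ?_⟩
    · simp only [mem_coe, mem_filter, mem_univ, true_and, Fin.lt_def]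
      omega
    · exact Prod.ext (Fin.ext (by show a + ((p.1:ℕ) - a) = (p.1:ℕ); omega))
        (Prod.ext (Fin.ext (by show a + ((p.2.1:ℕ) - a) = (p.2.1:ℕ); omega))
          (Fin.ext (by show a + b = (p.2.2:ℕ); omega)))

end Boundary

lemma L31 {a b : ℕ} (α : Equiv.Perm (Fin a)) (β : Equiv.Perm (Fin b)) :
    occ2_31 (ssum α (dsum β (1 : Equiv.Perm (Fin 1)))) = occ2_31 α + occ2_31 β + stat12end α := by
  rw [occ2_31, card_split (n := a + (b+1)) _ a (a+b) (by omega) (by omega),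
    piece_low31 α β, piece_bd31 α β, piece_mid31 α β, piece_top31 α β]
  omega

lemma L13 {a b : ℕ} (α : Equiv.Perm (Fin a)) (β : Equiv.Perm (Fin b)) :
    occ2_13 (ssum α (dsum β (1 : Equiv.Perm (Fin 1)))) = occ2_13 α + occ2_13 β + stat21end β := by
  rw [occ2_13, card_split (n := a + (b+1)) _ a (a+b) (by omega) (by omega),
    piece_low13 α β, piece_bd13 α β, piece_mid13 α β, piece_top13 α β]
  omega

lemma castPerm_val {m n : ℕ} (h : m = n) (σ : Equiv.Perm (Fin m)) (i : Fin n) :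
    ((castPerm h σ) i).val = (σ ⟨i.val, by omega⟩).val := by
  subst h; rfl


lemma decomp {n : ℕ} (hn : 0 < n) (π : Equiv.Perm (Fin n)) (hπ : avoids132 π) :
    ∃ (a b : ℕ) (hab : a + (b+1) = n) (α : Equiv.Perm (Fin a)) (β : Equiv.Perm (Fin b)),
      avoids132 α ∧ avoids132 β ∧
        π = castPerm hab (ssum α (dsum β (1 : Equiv.Perm (Fin 1)))) := by
  obtain ⟨b, hbv⟩ : ∃ b, ((π ⟨n-1, by omega⟩ : Fin n) : ℕ) = b := ⟨_, rfl⟩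
  have hbn : b < n := by
    have := (π (⟨n-1, by omega⟩ : Fin n)).isLt
    omega
  -- downward closure of the set of positions with large values
  have down : ∀ i j : Fin n, (i:ℕ) < (j:ℕ) → b < (π j : ℕ) → b < (π i : ℕ) := by
    intro i j hij hj
    by_contra hcon
    push_neg at hcon
    have hjn : (j:ℕ) < n - 1 := by
      rcases Nat.lt_or_ge (j:ℕ) (n-1) with h | h
      · exact h
      · exfalso
        have hje : j = ⟨n-1, by omega⟩ := Fin.ext (show (j:ℕ) = n-1 by have := j.isLt; omega)
        have : (π j : ℕ) = b := by rw [hje]; exact hbv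
        omega
    have hineq : (π i : ℕ) < b := by
      rcases Nat.lt_or_ge (π i : ℕ) b with h | h
      · exact h
      · exfalso
        have hieq : i = (⟨n-1, by omega⟩ : Fin n) := by
          apply π.injective
          apply Fin.ext
          omega
        have hival : (i:ℕ) = n - 1 := congrArg Fin.val hieq
        omega
    exact hπ ⟨i, j, ⟨n-1, by omega⟩, hij, (show (j:ℕ) < n-1 from hjn),
      (show (π i : ℕ) < (π ⟨n-1, by omega⟩ : ℕ) by omega),
      (show (π ⟨n-1, by omega⟩ : ℕ) < (π j : ℕ) by omega)⟩
  -- cardinality of that set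
  have hcard : (univ.filter (fun i : Fin n => b < (π i : ℕ))).card = n - 1 - b := by
    have h1 : (univ.filter (fun i : Fin n => b < (π i : ℕ))).card
        = (univ.filter (fun v : Fin n => b < (v : ℕ))).card := by
      apply Finset.card_nbij (fun i => π i)
      · intro i hi
        simp only [mem_coe, mem_filter, mem_univ, true_and] at hi ⊢
        exact hi
      · intro i _ j _ hij
        exact π.injective hij
      · intro v hv
        simp only [coe_filter, Set.mem_setOf_eq, mem_univ, true_and] at hv
        refine ⟨π.symm v, ?_, by simp⟩
        simp only [mem_coe, mem_filter, mem_univ, true_and, Equiv.apply_symm_apply]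
        exact hv
    rw [h1]
    have h2 : (univ.filter (fun v : Fin n => b < (v:ℕ))) = Finset.Ioi (⟨b, hbn⟩ : Fin n) := by
      ext v
      simp only [mem_filter, mem_univ, true_and, Finset.mem_Ioi]
      exact ⟨fun h => h, fun h => h⟩
    rw [h2, Fin.card_Ioi]
  -- the key block characterization
  have key : ∀ i : Fin n, ((i:ℕ) < n - 1 - b ↔ b < (π i : ℕ)) := by
    intro i
    constructor
    · intro hia
      by_contra hcon
      have hsub : (univ.filter (fun j : Fin n => b < (π j : ℕ))) ⊆ Finset.Iio i := by
        intro j hj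
        simp only [mem_filter, mem_univ, true_and] at hj
        simp only [Finset.mem_Iio]
        rcases Nat.lt_trichotomy (j:ℕ) (i:ℕ) with h | h | h
        · exact h
        · exfalso; rw [Fin.ext h] at hj; exact hcon hj
        · exfalso; exact hcon (down i j h hj)
      have hle := Finset.card_le_card hsub
      rw [hcard, Fin.card_Iio] at hle
      omega
    · intro hbi
      by_contra hcon
      push_neg at hcon
      have hsub : Finset.Iic i ⊆ univ.filter (fun j : Fin n => b < (π j : ℕ)) := by
        intro j hj
        simp only [Finset.mem_Iic] at hj
        simp only [mem_filter, mem_univ, true_and]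
        rcases Nat.lt_or_ge (j:ℕ) (i:ℕ) with h | h
        · exact down j i h hbi
        · have hji : (j:ℕ) ≤ (i:ℕ) := hj
          rw [Fin.ext (show (j:ℕ) = (i:ℕ) by omega)]
          exact hbi
      have hle := Finset.card_le_card hsub
      rw [hcard, Fin.card_Iic] at hle
      omega
  have hab : (n - 1 - b) + (b + 1) = n := by omega
  have hposα : ∀ x : Fin (n-1-b), (x:ℕ) < n := fun x => by have := x.isLt; omega
  have hposβ : ∀ x : Fin b, (n-1-b) + (x:ℕ) < n := fun x => by have := x.isLt; omega
  have hkeyα : ∀ x : Fin (n-1-b), b < (π ⟨(x:ℕ), hposα x⟩ : ℕ) :=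
    fun x => (key ⟨(x:ℕ), hposα x⟩).mp x.isLt
  have hvβ : ∀ x : Fin b, (π ⟨(n-1-b) + (x:ℕ), hposβ x⟩ : ℕ) < b := by
    intro x
    have h1 : ¬ b < (π ⟨(n-1-b) + (x:ℕ), hposβ x⟩ : ℕ) := by
      intro hgt
      have h2 : (n-1-b) + (x:ℕ) < n-1-b := (key _).mpr hgt
      omega
    rcases Nat.lt_or_ge (π ⟨(n-1-b) + (x:ℕ), hposβ x⟩ : ℕ) b with h | h
    · exact h
    · exfalso
      have heq : (π ⟨(n-1-b) + (x:ℕ), hposβ x⟩ : ℕ) = b := by omega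
      have hcc : (⟨(n-1-b) + (x:ℕ), hposβ x⟩ : Fin n) = ⟨n-1, by omega⟩ :=
        π.injective (Fin.ext (by omega))
      have hv : (n-1-b) + (x:ℕ) = n - 1 := congrArg Fin.val hcc
      have := x.isLt
      omega
  -- build α
  have hfα : ∀ x : Fin (n-1-b), (π ⟨(x:ℕ), hposα x⟩ : ℕ) - (b+1) < n-1-b := by
    intro x
    have h1 := hkeyα x
    have h2 := (π ⟨(x:ℕ), hposα x⟩).isLt
    have := x.isLt
    omega
  have hinjα : Function.Injective (fun x : Fin (n-1-b) =>
      (⟨(π ⟨(x:ℕ), hposα x⟩ : ℕ) - (b+1), hfα x⟩ : Fin (n-1-b))) := by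
    intro x y hxy
    have hx := hkeyα x
    have hy := hkeyα y
    have hval0 := congrArg Fin.val hxy
    have hval : (π ⟨(x:ℕ), hposα x⟩ : ℕ) - (b+1) = (π ⟨(y:ℕ), hposα y⟩ : ℕ) - (b+1) := hval0
    have hx2 : (π ⟨(x:ℕ), hposα x⟩ : Fin n) = π ⟨(y:ℕ), hposα y⟩ := Fin.ext (by omega)
    have hx3 := π.injective hx2
    have hx4 := congrArg Fin.val hx3
    exact Fin.ext hx4
  obtain ⟨α, hαval⟩ : ∃ α : Equiv.Perm (Fin (n-1-b)),
      ∀ x, (α x : ℕ) = (π ⟨(x:ℕ), hposα x⟩ : ℕ) - (b+1) :=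
    ⟨Equiv.ofBijective _ (Finite.injective_iff_bijective.mp hinjα), fun x => rfl⟩
  -- build β
  have hinjβ : Function.Injective (fun x : Fin b =>
      (⟨(π ⟨(n-1-b) + (x:ℕ), hposβ x⟩ : ℕ), hvβ x⟩ : Fin b)) := by
    intro x y hxy
    have hval0 := congrArg Fin.val hxy
    have hval : (π ⟨(n-1-b) + (x:ℕ), hposβ x⟩ : ℕ) = (π ⟨(n-1-b) + (y:ℕ), hposβ y⟩ : ℕ) := hval0
    have hx2 := π.injective (Fin.ext hval)
    have hx40 := congrArg Fin.val hx2
    have hx4 : (n-1-b) + (x:ℕ) = (n-1-b) + (y:ℕ) := hx40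
    exact Fin.ext (show (x:ℕ) = (y:ℕ) by omega)
  obtain ⟨β, hβval⟩ : ∃ β : Equiv.Perm (Fin b),
      ∀ x, (β x : ℕ) = (π ⟨(n-1-b) + (x:ℕ), hposβ x⟩ : ℕ) :=
    ⟨Equiv.ofBijective _ (Finite.injective_iff_bijective.mp hinjβ), fun x => rfl⟩
  refine ⟨n-1-b, b, hab, α, β, ?_, ?_, ?_⟩
  · rintro ⟨i, j, k, hij, hjk, h1, h2⟩
    refine hπ ⟨⟨(i:ℕ), hposα i⟩, ⟨(j:ℕ), hposα j⟩, ⟨(k:ℕ), hposα k⟩, hij, hjk, ?_, ?_⟩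
    · show (π ⟨(i:ℕ), hposα i⟩ : ℕ) < (π ⟨(k:ℕ), hposα k⟩ : ℕ)
      have e1 := hαval i; have e2 := hαval k
      have k1 := hkeyα i; have k2 := hkeyα k
      have h1' : (α i : ℕ) < (α k : ℕ) := h1
      omega
    · show (π ⟨(k:ℕ), hposα k⟩ : ℕ) < (π ⟨(j:ℕ), hposα j⟩ : ℕ)
      have e1 := hαval k; have e2 := hαval j
      have k1 := hkeyα k; have k2 := hkeyα j
      have h2' : (α k : ℕ) < (α j : ℕ) := h2
      omega
  · rintro ⟨i, j, k, hij, hjk, h1, h2⟩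
    refine hπ ⟨⟨(n-1-b) + (i:ℕ), hposβ i⟩, ⟨(n-1-b) + (j:ℕ), hposβ j⟩,
      ⟨(n-1-b) + (k:ℕ), hposβ k⟩, ?_, ?_, ?_, ?_⟩
    · show (n-1-b) + (i:ℕ) < (n-1-b) + (j:ℕ)
      have h' : (i:ℕ) < (j:ℕ) := hij
      omega
    · show (n-1-b) + (j:ℕ) < (n-1-b) + (k:ℕ)
      have h' : (j:ℕ) < (k:ℕ) := hjk
      omega
    · show (π ⟨(n-1-b) + (i:ℕ), hposβ i⟩ : ℕ) < (π ⟨(n-1-b) + (k:ℕ), hposβ k⟩ : ℕ)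
      have e1 := hβval i; have e2 := hβval k
      have h1' : (β i : ℕ) < (β k : ℕ) := h1
      omega
    · show (π ⟨(n-1-b) + (k:ℕ), hposβ k⟩ : ℕ) < (π ⟨(n-1-b) + (j:ℕ), hposβ j⟩ : ℕ)
      have e1 := hβval k; have e2 := hβval j
      have h2' : (β k : ℕ) < (β j : ℕ) := h2
      omega
  · apply Equiv.ext
    intro i
    apply Fin.ext
    rw [castPerm_val hab (ssum α (dsum β (1 : Equiv.Perm (Fin 1)))) i]
    rcases Nat.lt_or_ge (i:ℕ) (n-1-b) with h | h
    · have e := sval_low α β (x := (⟨(i:ℕ), h⟩ : Fin (n-1-b)))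
        (y := (⟨(i:ℕ), by omega⟩ : Fin ((n-1-b)+(b+1)))) rfl
      have e2 := hαval ⟨(i:ℕ), h⟩
      have e3 := hkeyα ⟨(i:ℕ), h⟩
      have e4 : (π ⟨((⟨(i:ℕ), h⟩ : Fin (n-1-b)) : ℕ), hposα ⟨(i:ℕ), h⟩⟩ : ℕ) = (π i : ℕ) := by
        rw [show (⟨((⟨(i:ℕ), h⟩ : Fin (n-1-b)) : ℕ), hposα ⟨(i:ℕ), h⟩⟩ : Fin n) = i from
          Fin.ext rfl]
      omega
    · rcases Nat.lt_or_ge (i:ℕ) (n-1) with h2 | h2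
      · have hxlt : (i:ℕ) - (n-1-b) < b := by omega
        have e := sval_mid α β (x := (⟨(i:ℕ) - (n-1-b), hxlt⟩ : Fin b))
          (y := (⟨(i:ℕ), by omega⟩ : Fin ((n-1-b)+(b+1))))
          (show (i:ℕ) = (n-1-b) + ((i:ℕ) - (n-1-b)) from by omega)
        have e2 := hβval ⟨(i:ℕ) - (n-1-b), hxlt⟩
        have e4 : (π ⟨(n-1-b) + ((⟨(i:ℕ) - (n-1-b), hxlt⟩ : Fin b) : ℕ),
            hposβ ⟨(i:ℕ) - (n-1-b), hxlt⟩⟩ : ℕ) = (π i : ℕ) := by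
          rw [show (⟨(n-1-b) + ((⟨(i:ℕ) - (n-1-b), hxlt⟩ : Fin b) : ℕ),
            hposβ ⟨(i:ℕ) - (n-1-b), hxlt⟩⟩ : Fin n) = i from
            Fin.ext (show (n-1-b) + ((i:ℕ) - (n-1-b)) = (i:ℕ) by omega)]
        omega
      · have e := sval_top α β (y := (⟨(i:ℕ), by omega⟩ : Fin ((n-1-b)+(b+1))))
          (show (i:ℕ) = (n-1-b) + b from by have := i.isLt; omega)
        have hieq : i = (⟨n-1, by omega⟩ : Fin n) :=
          Fin.ext (show (i:ℕ) = n-1 by have := i.isLt; omega)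
        have e2 : (π i : ℕ) = b := by rw [hieq]; exact hbv
        omega

lemma stat12end_pos {m : ℕ} (hm : 0 < m) (γ : Equiv.Perm (Fin m)) :
    stat12end γ = (γ ⟨m-1, by omega⟩).val := by
  rw [stat12end]
  rw [show (γ ⟨m-1, by omega⟩).val = (Finset.Iio (γ ⟨m-1, by omega⟩)).card from (Fin.card_Iio _).symm]
  apply Finset.card_nbij (fun p => γ p.1)
  · intro p hp
    simp only [mem_coe, mem_filter, mem_univ, true_and] at hp
    obtain ⟨h1, h2, h3⟩ := hp
    have : p.2 = ⟨m-1, by omega⟩ := Fin.ext (show (p.2:ℕ) = m-1 by omega)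
    rw [this] at h3
    simpa [Finset.mem_Iio] using h3
  · intro p hp q hq hpq
    simp only [coe_filter, Set.mem_setOf_eq, mem_univ, true_and] at hp hq
    have h1 : p.1 = q.1 := γ.injective hpq
    have h2 : p.2 = q.2 := by
      have := hp.2.1; have := hq.2.1
      apply Fin.ext; omega
    exact Prod.ext h1 h2
  · intro v hv
    simp only [coe_Iio, Set.mem_Iio] at hv
    refine ⟨(γ.symm v, ⟨m-1, by omega⟩), ?_, by simp⟩
    simp only [coe_filter, Set.mem_setOf_eq, mem_univ, true_and, Equiv.apply_symm_apply]
    have hne : γ.symm v ≠ ⟨m-1, by omega⟩ := by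
      intro h
      have hv2 : v = γ ⟨m-1, by omega⟩ := by rw [← h]; simp
      rw [hv2] at hv
      exact lt_irrefl _ hv
    have hlt : (γ.symm v).val < m - 1 := by
      have := (γ.symm v).isLt
      have : (γ.symm v).val ≠ m - 1 := fun h => hne (Fin.ext h)
      omega
    exact ⟨by simp [Fin.lt_def]; omega, by omega, hv⟩

lemma stat21end_pos {m : ℕ} (hm : 0 < m) (γ : Equiv.Perm (Fin m)) :
    stat21end γ = m - 1 - (γ ⟨m-1, by omega⟩).val := by
  rw [stat21end]
  rw [show m - 1 - (γ ⟨m-1, by omega⟩).val = (Finset.Ioi (γ ⟨m-1, by omega⟩)).card from (Fin.card_Ioi _).symm]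
  apply Finset.card_nbij (fun p => γ p.1)
  · intro p hp
    simp only [mem_coe, mem_filter, mem_univ, true_and] at hp
    obtain ⟨h1, h2, h3⟩ := hp
    have : p.2 = ⟨m-1, by omega⟩ := Fin.ext (show (p.2:ℕ) = m-1 by omega)
    rw [this] at h3
    simpa [Finset.mem_Ioi] using h3
  · intro p hp q hq hpq
    simp only [coe_filter, Set.mem_setOf_eq, mem_univ, true_and] at hp hq
    have h1 : p.1 = q.1 := γ.injective hpq
    have h2 : p.2 = q.2 := by
      have := hp.2.1; have := hq.2.1
      apply Fin.ext; omega
    exact Prod.ext h1 h2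
  · intro v hv
    simp only [coe_Ioi, Set.mem_Ioi] at hv
    refine ⟨(γ.symm v, ⟨m-1, by omega⟩), ?_, by simp⟩
    simp only [coe_filter, Set.mem_setOf_eq, mem_univ, true_and, Equiv.apply_symm_apply]
    have hne : γ.symm v ≠ ⟨m-1, by omega⟩ := by
      intro h
      have hv2 : v = γ ⟨m-1, by omega⟩ := by rw [← h]; simp
      rw [hv2] at hv
      exact lt_irrefl _ hv
    have hlt : (γ.symm v).val < m - 1 := by
      have := (γ.symm v).isLt
      have : (γ.symm v).val ≠ m - 1 := fun h => hne (Fin.ext h)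
      omega
    exact ⟨by simp [Fin.lt_def]; omega, by omega, hv⟩

lemma stat12end_zero (γ : Equiv.Perm (Fin 0)) : stat12end γ = 0 := by
  simp [stat12end]

lemma stat21end_zero (γ : Equiv.Perm (Fin 0)) : stat21end γ = 0 := by
  simp [stat21end]


lemma castPerm_val' {m n : ℕ} (h : m = n) (σ : Equiv.Perm (Fin m)) (i : Fin n) (j : Fin m)
    (hj : (j:ℕ) = (i:ℕ)) : ((castPerm h σ) i : ℕ) = (σ j : ℕ) := by
  subst h
  rw [show j = i from Fin.ext hj]
  rfl

lemma castPerm_self {m : ℕ} (h : m = m) (σ : Equiv.Perm (Fin m)) :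
    castPerm h σ = σ := by
  ext i; rfl

lemma occ2_31_castPerm {m n : ℕ} (h : m = n) (σ : Equiv.Perm (Fin m)) :
    occ2_31 (castPerm h σ) = occ2_31 σ := by
  subst h; rw [castPerm_self]

lemma occ2_13_castPerm {m n : ℕ} (h : m = n) (σ : Equiv.Perm (Fin m)) :
    occ2_13 (castPerm h σ) = occ2_13 σ := by
  subst h; rw [castPerm_self]

lemma lastval (φ : ∀ n : ℕ, Equiv.Perm (Fin n) → Equiv.Perm (Fin n))
    (hrec : ∀ (a b : ℕ) (α : Equiv.Perm (Fin a)) (β : Equiv.Perm (Fin b)),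
      avoids132 α → avoids132 β →
      φ (a + (b + 1)) (ssum α (dsum β (1 : Equiv.Perm (Fin 1)))) =
        castPerm (show b + (a + 1) = a + (b + 1) from Nat.add_left_comm b a 1)
          (ssum (φ b β) (dsum (φ a α) (1 : Equiv.Perm (Fin 1)))))
    (n : ℕ) (hn : 0 < n) (π : Equiv.Perm (Fin n)) (hπ : avoids132 π) :
    ((φ n π) ⟨n-1, by omega⟩ : ℕ) + ((π ⟨n-1, by omega⟩ : Fin n) : ℕ) = n - 1 := by
  obtain ⟨a, b, hab, α, β, hα, hβ, hdef⟩ := decomp hn π hπ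
  subst hab
  rw [castPerm_self] at hdef
  subst hdef
  rw [hrec a b α β hα hβ]
  have e1 := sval_top α β (y := (⟨a+(b+1)-1, by omega⟩ : Fin (a+(b+1))))
    (show a+(b+1)-1 = a + b by omega)
  have e2 := sval_top (φ b β) (φ a α) (y := (⟨a+(b+1)-1, by omega⟩ : Fin (b+(a+1))))
    (show a+(b+1)-1 = b + a by omega)
  have e3 := castPerm_val' (show b+(a+1) = a+(b+1) from Nat.add_left_comm b a 1)
    (ssum (φ b β) (dsum (φ a α) (1 : Equiv.Perm (Fin 1))))
    (⟨a+(b+1)-1, by omega⟩ : Fin (a+(b+1)))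
    (⟨a+(b+1)-1, by omega⟩ : Fin (b+(a+1))) rfl
  omega

theorem stmt6
    (φ : ∀ n : ℕ, Equiv.Perm (Fin n) → Equiv.Perm (Fin n))
    (hrec : ∀ (a b : ℕ) (α : Equiv.Perm (Fin a)) (β : Equiv.Perm (Fin b)),
      avoids132 α → avoids132 β →
      φ (a + (b + 1)) (ssum α (dsum β (1 : Equiv.Perm (Fin 1)))) =
        castPerm (show b + (a + 1) = a + (b + 1) by omega)
          (ssum (φ b β) (dsum (φ a α) (1 : Equiv.Perm (Fin 1))))) :
    ∀ (n : ℕ) (π : Equiv.Perm (Fin n)), avoids132 π →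
      occ2_31 (φ n π) = occ2_13 π ∧ occ2_13 (φ n π) = occ2_31 π := by
  intro n
  induction n using Nat.strong_induction_on with
  | _ n IH =>
    intro π hπ
    rcases Nat.eq_zero_or_pos n with h0 | hn
    · subst h0
      constructor <;> simp [occ2_31, occ2_13, Finset.univ_eq_empty]
    · obtain ⟨a, b, hab, α, β, hα, hβ, hdef⟩ := decomp hn π hπ
      subst hab
      rw [castPerm_self] at hdef
      subst hdef
      obtain ⟨ih1α, ih2α⟩ := IH a (by omega) α hα
      obtain ⟨ih1β, ih2β⟩ := IH b (by omega) β hβ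
      have cross1 : stat12end (φ b β) = stat21end β := by
        rcases Nat.eq_zero_or_pos b with hb0 | hb0
        · subst hb0
          rw [stat12end_zero, stat21end_zero]
        · have l := lastval φ hrec b hb0 β hβ
          rw [stat12end_pos hb0 (φ b β), stat21end_pos hb0 β]
          omega
      have cross2 : stat21end (φ a α) = stat12end α := by
        rcases Nat.eq_zero_or_pos a with ha0 | ha0
        · subst ha0
          rw [stat12end_zero, stat21end_zero]
        · have l := lastval φ hrec a ha0 α hα
          rw [stat12end_pos ha0 α, stat21end_pos ha0 (φ a α)]
          omega
      rw [hrec a b α β hα hβ, occ2_31_castPerm, occ2_13_castPerm,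
        L31 (φ b β) (φ a α), L13 (φ b β) (φ a α), L31 α β, L13 α β]
      omega
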